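/- arXiv:2401.02220 — 2 statements merged into one kernel-verified Lean document; each statement's English description precedes it below -/
import Mathlib

section
/- Let D be a set, V_n a finite-dimensional subspace of B(D), and let ρ = Σ_{x∈X} λ_x δ_x be a discrete probability measure supported on a finite multiset X ⊂ D (with λ_x ≥ 0, Σ_{x∈X} λ_x = 1). Suppose there is K > 0 such that ‖f‖_∞ ≤ K ‖f‖_{L₂(ρ)} for all f ∈ V_n. Then the weighted least-squares operator A(ρ,V_n) : B(D) → V_n, defined by A(ρ,V_n)f = argmin_{g∈V_n} Σ_{x∈X} λ_x |g(x) − f(x)|², is a well-defined linear projection onto V_n whose operator norm on B(D) satisfies ‖A(ρ,V_n)‖ ≤ K. -/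
/-- **Sampling projections via weighted least squares.**
Let `D` be a set (a type with the discrete topology, so `BoundedContinuousFunction D ℂ` is
the space `B(D)` of bounded complex functions with sup-norm), `V` a finite-dimensional
subspace of `B(D)`, and `ρ = ∑ k, λ k δ_{x k}` a discrete probability measure on `D`
(given by finitely many points `x k` and weights `λ k ≥ 0` with `∑ λ k = 1`). If
`‖f‖_∞ ≤ K ‖f‖_{L₂(ρ)}` for all `f ∈ V`, then the weighted least-squares operator
`A(ρ,V)` — the map sending `f` to the (unique) minimizer over `g ∈ V` of
`∑ k, λ k |g (x k) - f (x k)|²` — is a well-defined linear projection onto `V` with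
operator norm at most `K`. -/
theorem stmt9 {D : Type*} [TopologicalSpace D] [DiscreteTopology D]
    (V : Submodule ℂ (BoundedContinuousFunction D ℂ)) [FiniteDimensional ℂ V]
    (N : ℕ) (x : Fin N → D) (lam : Fin N → ℝ)
    (hlam : ∀ k, 0 ≤ lam k) (hsum : ∑ k, lam k = 1)
    (K : ℝ) (hK : 0 < K)
    (hdisc : ∀ f ∈ V, ‖f‖ ≤ K * Real.sqrt (∑ k, lam k * ‖f (x k)‖ ^ 2)) :
    ∃ A : BoundedContinuousFunction D ℂ →ₗ[ℂ] BoundedContinuousFunction D ℂ,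
      (∀ f, A f ∈ V ∧
        ∀ g ∈ V, ∑ k, lam k * ‖A f (x k) - f (x k)‖ ^ 2
          ≤ ∑ k, lam k * ‖g (x k) - f (x k)‖ ^ 2) ∧
      (∀ (f h : BoundedContinuousFunction D ℂ), h ∈ V →
        (∀ g ∈ V, ∑ k, lam k * ‖h (x k) - f (x k)‖ ^ 2
          ≤ ∑ k, lam k * ‖g (x k) - f (x k)‖ ^ 2) →
        h = A f) ∧
      (∀ g ∈ V, A g = g) ∧
      (∀ f, ‖A f‖ ≤ K * ‖f‖) := by
  classical
  -- The weighted evaluation map into Euclidean space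
  let T : BoundedContinuousFunction D ℂ →ₗ[ℂ] EuclideanSpace ℂ (Fin N) :=
    { toFun := fun f => WithLp.toLp 2 (fun k => ((Real.sqrt (lam k) : ℝ) : ℂ) * f (x k))
      map_add' := by intro f g; ext k; simp [mul_add]
      map_smul' := by intro c f; ext k; simp; ring }
  have hT : ∀ f : BoundedContinuousFunction D ℂ,
      ∑ k, lam k * ‖f (x k)‖ ^ 2 = ‖T f‖ ^ 2 := by
    intro f
    rw [EuclideanSpace.norm_eq, Real.sq_sqrt (by positivity)]
    refine Finset.sum_congr rfl fun k _ => ?_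
    simp only [T, LinearMap.coe_mk, AddHom.coe_mk, PiLp.toLp_apply]
    rw [norm_mul, Complex.norm_real, Real.norm_eq_abs,
      abs_of_nonneg (Real.sqrt_nonneg _), mul_pow, Real.sq_sqrt (hlam k)]
  have hT2 : ∀ g f : BoundedContinuousFunction D ℂ,
      ∑ k, lam k * ‖g (x k) - f (x k)‖ ^ 2 = ‖T g - T f‖ ^ 2 := by
    intro g f
    rw [← map_sub, ← hT]
    simp [BoundedContinuousFunction.sub_apply]
  -- `T` restricted to `V` is injective
  have hnorm : ∀ f ∈ V, ‖f‖ ≤ K * ‖T f‖ := by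
    intro f hf
    have := hdisc f hf
    rwa [hT, Real.sqrt_sq (norm_nonneg _)] at this
  have hTle : ∀ f : BoundedContinuousFunction D ℂ, ‖T f‖ ≤ ‖f‖ := by
    intro f
    have h1 : ‖T f‖ ^ 2 ≤ ‖f‖ ^ 2 := by
      rw [← hT]
      calc ∑ k, lam k * ‖f (x k)‖ ^ 2 ≤ ∑ k, lam k * ‖f‖ ^ 2 := by
            refine Finset.sum_le_sum fun k _ => ?_
            exact mul_le_mul_of_nonneg_left
              (pow_le_pow_left₀ (norm_nonneg _) (f.norm_coe_le_norm (x k)) 2) (hlam k)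
        _ = ‖f‖ ^ 2 := by rw [← Finset.sum_mul, hsum, one_mul]
    have := Real.sqrt_le_sqrt h1
    rwa [Real.sqrt_sq (norm_nonneg _), Real.sqrt_sq (norm_nonneg _)] at this
  set W : Submodule ℂ (EuclideanSpace ℂ (Fin N)) := V.map T with hW
  haveI : FiniteDimensional ℂ W := Module.Finite.map V T
  -- the linear equivalence between V and W
  let Tres : V →ₗ[ℂ] W :=
    LinearMap.codRestrict W (T.domRestrict V) fun v => Submodule.mem_map_of_mem v.2
  have hTres_inj : Function.Injective Tres := by
    rw [← LinearMap.ker_eq_bot, LinearMap.ker_eq_bot']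
    intro v hv
    have h0 : T (v : BoundedContinuousFunction D ℂ) = 0 := congrArg Subtype.val hv
    have := hnorm v v.2
    rw [h0, norm_zero, mul_zero] at this
    exact Subtype.ext (norm_le_zero_iff.1 this)
  have hTres_surj : Function.Surjective Tres := by
    rintro ⟨w, hw⟩
    obtain ⟨v, hv, rfl⟩ := hw
    exact ⟨⟨v, hv⟩, rfl⟩
  let e : V ≃ₗ[ℂ] W := LinearEquiv.ofBijective Tres ⟨hTres_inj, hTres_surj⟩
  let P := W.orthogonalProjectionOnto
  let A : BoundedContinuousFunction D ℂ →ₗ[ℂ] BoundedContinuousFunction D ℂ :=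
    V.subtype ∘ₗ (e.symm.toLinearMap ∘ₗ ((P : EuclideanSpace ℂ (Fin N) →ₗ[ℂ] W) ∘ₗ T))
  have hAmem : ∀ f, A f ∈ V := fun f => (e.symm (P (T f))).2
  have hTA : ∀ f, T (A f) = (P (T f) : EuclideanSpace ℂ (Fin N)) := by
    intro f
    have : Tres (e.symm (P (T f))) = P (T f) := e.apply_symm_apply (P (T f))
    exact congrArg Subtype.val this
  have hbdd : ∀ u : EuclideanSpace ℂ (Fin N),
      BddBelow (Set.range fun w : W => ‖u - w‖) := by
    intro u
    exact ⟨0, by rintro y ⟨w, rfl⟩; exact norm_nonneg _⟩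
  -- minimality
  have hmin : ∀ f, ∀ g ∈ V, ∑ k, lam k * ‖A f (x k) - f (x k)‖ ^ 2
      ≤ ∑ k, lam k * ‖g (x k) - f (x k)‖ ^ 2 := by
    intro f g hg
    rw [hT2, hT2]
    have h1 : ‖T f - (P (T f) : EuclideanSpace ℂ (Fin N))‖ ≤ ‖T f - T g‖ := by
      rw [show (P (T f) : EuclideanSpace ℂ (Fin N)) = W.starProjection (T f) from rfl,
        Submodule.starProjection_minimal]
      exact ciInf_le (hbdd (T f)) ⟨T g, Submodule.mem_map_of_mem hg⟩
    rw [hTA, norm_sub_rev]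
    exact pow_le_pow_left₀ (norm_nonneg _) (h1.trans_eq (norm_sub_rev _ _)) 2
  -- uniqueness
  have huniq : ∀ (f h : BoundedContinuousFunction D ℂ), h ∈ V →
      (∀ g ∈ V, ∑ k, lam k * ‖h (x k) - f (x k)‖ ^ 2
        ≤ ∑ k, lam k * ‖g (x k) - f (x k)‖ ^ 2) → h = A f := by
    intro f h hh hmin'
    have hiInf : ‖T f - T h‖ = ⨅ w : W, ‖T f - w‖ := by
      refine le_antisymm (le_ciInf ?_) (ciInf_le (hbdd (T f)) ⟨T h, Submodule.mem_map_of_mem hh⟩)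
      rintro ⟨w, hw⟩
      obtain ⟨g, hg, rfl⟩ := hw
      have := hmin' g hg
      rw [hT2, hT2] at this
      have h2 := Real.sqrt_le_sqrt this
      rw [Real.sqrt_sq (norm_nonneg _), Real.sqrt_sq (norm_nonneg _),
        norm_sub_rev, norm_sub_rev (T g)] at h2
      exact h2
    have hinner := (Submodule.norm_eq_iInf_iff_inner_eq_zero W (Submodule.mem_map_of_mem hh)).1 hiInf
    have hPh : (P (T f) : EuclideanSpace ℂ (Fin N)) = T h :=
      Submodule.eq_starProjection_of_mem_of_inner_eq_zero (Submodule.mem_map_of_mem hh) hinner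
    have hTeq : T (h - A f) = 0 := by
      rw [map_sub, hTA, hPh, sub_self]
    have hsub : h - A f ∈ V := V.sub_mem hh (hAmem f)
    have := hnorm _ hsub
    rw [hTeq, norm_zero, mul_zero] at this
    have : h - A f = 0 := norm_le_zero_iff.1 this
    exact sub_eq_zero.1 this
  refine ⟨A, fun f => ⟨hAmem f, hmin f⟩, huniq, ?_, ?_⟩
  · intro g hg
    refine (huniq g g hg fun g' _ => ?_).symm
    have : ∑ k, lam k * ‖g (x k) - g (x k)‖ ^ 2 = 0 := by simp
    rw [this]
    exact Finset.sum_nonneg fun k _ => mul_nonneg (hlam k) (by positivity)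
  · intro f
    have h1 : ‖A f‖ ≤ K * ‖T (A f)‖ := hnorm _ (hAmem f)
    have h2 : ‖T (A f)‖ ≤ ‖T f‖ := by
      rw [hTA]
      calc ‖(P (T f) : EuclideanSpace ℂ (Fin N))‖ = ‖P (T f)‖ := rfl
        _ ≤ ‖P‖ * ‖T f‖ := P.le_opNorm (T f)
        _ ≤ 1 * ‖T f‖ := by
            exact mul_le_mul_of_nonneg_right (Submodule.orthogonalProjectionOnto_norm_le W) (norm_nonneg _)
        _ = ‖T f‖ := one_mul _
    calc ‖A f‖ ≤ K * ‖T (A f)‖ := h1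
      _ ≤ K * ‖T f‖ := by exact mul_le_mul_of_nonneg_left h2 hK.le
      _ ≤ K * ‖f‖ := mul_le_mul_of_nonneg_left (hTle f) hK.le
end

section
/- Let D be a set, G a subspace of B(D), and ‖·‖ a seminorm on G with ‖f‖ ≤ ‖f‖_∞ for all f ∈ G. Let V_n be a finite-dimensional subspace of G and X ⊂ D a finite multiset such that ‖·‖_X is a norm on V_n and ‖g‖ ≤ C ‖g‖_X for all g ∈ V_n, for some C > 0. Then the least-squares algorithm A(X,V_n) is well defined on B(D) and for all f ∈ G, ‖f − A(X,V_n)f‖ ≤ (1 + C) · inf_{g∈V_n} ‖f − g‖_∞. -/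
/-- The seminorm `‖f‖_X = ((1/|X|) ∑_{x ∈ X} |f x|²)^{1/2}` associated with a finite
multiset `X` of points of `D`, on the space `B(D)` of bounded functions. -/
noncomputable def msNorm {D : Type*} [TopologicalSpace D] [DiscreteTopology D]
    (X : Multiset D) (f : BoundedContinuousFunction D ℂ) : ℝ :=
  Real.sqrt ((X.map fun x => ‖f x‖ ^ 2).sum / X.card)

private lemma list_sum_map_get {α : Type*} (l : List α) (g : α → ℝ) :
    (l.map g).sum = ∑ i : Fin l.length, g (l.get i) := by
  rw [← List.ofFn_getElem_eq_map, List.sum_ofFn]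
  rfl

/-- The evaluation map `B(D) → ℂ^{|X|}`. -/
noncomputable def evalMapAux {D : Type*} [TopologicalSpace D] [DiscreteTopology D]
    (X : Multiset D) :
    BoundedContinuousFunction D ℂ →ₗ[ℂ] EuclideanSpace ℂ (Fin X.toList.length) where
  toFun f := WithLp.toLp 2 (fun i => f (X.toList.get i))
  map_add' f g := by ext i; simp
  map_smul' c f := by ext i; simp

lemma msNorm_eq_eval {D : Type*} [TopologicalSpace D] [DiscreteTopology D]
    (X : Multiset D) (f : BoundedContinuousFunction D ℂ) :
    msNorm X f = ‖evalMapAux X f‖ / Real.sqrt (Multiset.card X) := by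
  rw [msNorm, Real.sqrt_div' _ (by positivity), EuclideanSpace.norm_eq]
  rw [show (Multiset.card X : ℝ) = (X.toList.length : ℝ) by rw [Multiset.length_toList]]
  congr 2
  · conv_lhs => rw [← Multiset.coe_toList X]
    rw [Multiset.map_coe, Multiset.sum_coe, list_sum_map_get]
    rfl

lemma msNorm_nonneg {D : Type*} [TopologicalSpace D] [DiscreteTopology D]
    (X : Multiset D) (f : BoundedContinuousFunction D ℂ) : 0 ≤ msNorm X f :=
  Real.sqrt_nonneg _

lemma msNorm_le_norm {D : Type*} [TopologicalSpace D] [DiscreteTopology D]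
    (X : Multiset D) (b : BoundedContinuousFunction D ℂ) : msNorm X b ≤ ‖b‖ := by
  rw [msNorm]
  rcases eq_or_ne X 0 with rfl | hX0
  · simpa using norm_nonneg b
  · have hcard : 0 < (Multiset.card X : ℝ) := by
      exact_mod_cast Multiset.card_pos.mpr hX0
    have hsum : (X.map fun x => ‖b x‖ ^ 2).sum ≤ (Multiset.card X : ℝ) * ‖b‖ ^ 2 := by
      have h := Multiset.sum_le_card_nsmul (X.map fun x => ‖b x‖ ^ 2) (‖b‖ ^ 2) ?_
      · simpa [Multiset.card_map, nsmul_eq_mul] using h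
      · intro x hx
        obtain ⟨y, -, rfl⟩ := Multiset.mem_map.mp hx
        exact pow_le_pow_left₀ (norm_nonneg _) (b.norm_coe_le_norm y) 2
    calc Real.sqrt ((X.map fun x => ‖b x‖ ^ 2).sum / Multiset.card X)
        ≤ Real.sqrt (‖b‖ ^ 2) := by
          apply Real.sqrt_le_sqrt
          rw [div_le_iff₀ hcard]
          linarith [hsum]
      _ = ‖b‖ := Real.sqrt_sq (norm_nonneg b)

set_option maxHeartbeats 1000000 in
set_option synthInstance.maxHeartbeats 400000 in
/-- **Error of least squares in a general seminorm.**
Let `D` be a set (a type with the discrete topology, so `BoundedContinuousFunction D ℂ` is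
`B(D)`, the bounded complex functions with sup-norm), `G` a subspace of `B(D)`, and `ν` a
seminorm on `G` with `ν f ≤ ‖f‖_∞`. Let `V` be a finite-dimensional subspace of `G` and
`X ⊆ D` a finite multiset such that `‖·‖_X` is a norm on `V` and `ν g ≤ C ‖g‖_X` on `V`
for some `C > 0`. Then the least-squares algorithm `A(X,V)` is well defined on `B(D)`
(for each `f` there is a unique minimizer in `V` of `g ↦ ‖g - f‖_X`), and any such
minimizing map `A` satisfies `ν (f - A f) ≤ (1 + C) inf_{g ∈ V} ‖f - g‖_∞` for `f ∈ G`. -/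
theorem stmt10 {D : Type*} [TopologicalSpace D] [DiscreteTopology D]
    (G : Submodule ℂ (BoundedContinuousFunction D ℂ))
    (ν : Seminorm ℂ G)
    (hν : ∀ f : G, ν f ≤ ‖(f : BoundedContinuousFunction D ℂ)‖)
    (V : Submodule ℂ G) [FiniteDimensional ℂ V]
    (X : Multiset D)
    (hX : ∀ g ∈ V, msNorm X (G.subtype g) = 0 → g = 0)
    (C : ℝ) (hC : 0 < C)
    (hdisc : ∀ g ∈ V, ν g ≤ C * msNorm X (G.subtype g))
    (A : BoundedContinuousFunction D ℂ → G)
    (hA : ∀ f, A f ∈ V ∧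
      ∀ g ∈ V, msNorm X (G.subtype (A f) - f) ≤ msNorm X (G.subtype g - f)) :
    (∀ f : BoundedContinuousFunction D ℂ, ∃! h : G, h ∈ V ∧
      ∀ g ∈ V, msNorm X (G.subtype h - f) ≤ msNorm X (G.subtype g - f)) ∧
    ∀ f : G, ν (f - A f) ≤
      (1 + C) * ⨅ g : V,
        ‖(f : BoundedContinuousFunction D ℂ) - ((g : G) : BoundedContinuousFunction D ℂ)‖ := by
  classical
  simp only [Submodule.subtype_apply] at hX hdisc hA ⊢
  set c : ℝ := Real.sqrt (Multiset.card X : ℝ) with hcdef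
  have hc0 : (0:ℝ) ≤ c := Real.sqrt_nonneg _
  set Φ := evalMapAux X with hΦdef
  have hrep : ∀ b : BoundedContinuousFunction D ℂ, msNorm X b = ‖Φ b‖ / c :=
    fun b => msNorm_eq_eval X b
  have hdivle : ∀ {a b : ℝ}, a ≤ b → a / c ≤ b / c := by
    intro a b hab
    rcases hc0.eq_or_lt with h | h
    · rw [← h]; simp
    · exact (div_le_div_iff_of_pos_right h).mpr hab
  -- parallelogram law for msNorm
  have hparm : ∀ a b : BoundedContinuousFunction D ℂ,
      msNorm X (a + b) ^ 2 + msNorm X (a - b) ^ 2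
        = 2 * (msNorm X a ^ 2 + msNorm X b ^ 2) := by
    intro a b
    have h := parallelogram_law_with_norm ℂ (Φ a) (Φ b)
    simp only [hrep, map_add, map_sub, div_pow]
    rw [← add_div]
    rw [show ‖Φ a + Φ b‖ ^ 2 + ‖Φ a - Φ b‖ ^ 2 = 2 * (‖Φ a‖ ^ 2 + ‖Φ b‖ ^ 2) by
      nlinarith [h]]
    ring
  have hsmul : ∀ (r : ℂ) (b : BoundedContinuousFunction D ℂ),
      msNorm X (r • b) = ‖r‖ * msNorm X b := by
    intro r b
    simp only [hrep, map_smul, norm_smul]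
    ring
  -- uniqueness of the minimizer
  have huniq : ∀ (f : BoundedContinuousFunction D ℂ) (h₁ h₂ : G), h₁ ∈ V → h₂ ∈ V →
      (∀ g ∈ V, msNorm X (↑h₁ - f) ≤ msNorm X (↑g - f)) →
      (∀ g ∈ V, msNorm X (↑h₂ - f) ≤ msNorm X (↑g - f)) →
      h₁ = h₂ := by
    intro f h₁ h₂ hm₁ hm₂ hmin₁ hmin₂
    set g₀ : G := (2⁻¹ : ℂ) • (h₁ + h₂) with hg₀
    have hg₀V : g₀ ∈ V := V.smul_mem _ (V.add_mem hm₁ hm₂)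
    have hcoe : (↑g₀ : BoundedContinuousFunction D ℂ)
        = (2⁻¹ : ℂ) • ((↑h₁ : BoundedContinuousFunction D ℂ) + ↑h₂) := by
      simp [hg₀]
    have e1 : (↑h₁ - f) + ((↑h₂ : BoundedContinuousFunction D ℂ) - f)
        = (2 : ℂ) • ((↑g₀ : BoundedContinuousFunction D ℂ) - f) := by
      rw [hcoe]
      rw [smul_sub, smul_smul]
      norm_num
      rw [two_smul]
      abel
    have e2 : (↑h₁ - f) - ((↑h₂ : BoundedContinuousFunction D ℂ) - f)
        = (↑(h₁ - h₂) : BoundedContinuousFunction D ℂ) := by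
      push_cast
      abel
    have hmeq : msNorm X (↑h₁ - f) = msNorm X (↑h₂ - f) :=
      le_antisymm (hmin₁ h₂ hm₂) (hmin₂ h₁ hm₁)
    have hge : msNorm X (↑h₁ - f) ≤ msNorm X (↑g₀ - f) := hmin₁ g₀ hg₀V
    have hpar := hparm (↑h₁ - f) ((↑h₂ : BoundedContinuousFunction D ℂ) - f)
    rw [e1, e2, hsmul, RCLike.norm_two] at hpar
    set s := msNorm X (↑(h₁ - h₂) : BoundedContinuousFunction D ℂ) with hsdef
    set m₁ := msNorm X ((↑h₁ : BoundedContinuousFunction D ℂ) - f) with hm₁def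
    set m₂ := msNorm X ((↑h₂ : BoundedContinuousFunction D ℂ) - f) with hm₂def
    set t := msNorm X ((↑g₀ : BoundedContinuousFunction D ℂ) - f) with htdef
    have hs0 : s = 0 := by
      have h1 : 0 ≤ s := hsdef ▸ msNorm_nonneg X _
      have h2 : 0 ≤ m₁ := hm₁def ▸ msNorm_nonneg X _
      have h3 : 0 ≤ t := htdef ▸ msNorm_nonneg X _
      nlinarith [hpar, hmeq, hge]
    rw [hsdef] at hs0
    have := hX (h₁ - h₂) (V.sub_mem hm₁ hm₂) hs0
    exact sub_eq_zero.mp this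
  -- existence of the minimizer, with the projection inequality
  have hex : ∀ f : BoundedContinuousFunction D ℂ, ∃ h : G, h ∈ V ∧ ∀ g ∈ V,
      msNorm X (↑h - f) ≤ msNorm X (↑g - f) ∧
      msNorm X ((↑g : BoundedContinuousFunction D ℂ) - ↑h) ≤ msNorm X (↑g - f) := by
    intro f
    set ψ : V →ₗ[ℂ] EuclideanSpace ℂ (Fin X.toList.length) :=
      Φ.comp (G.subtype.comp V.subtype) with hψdef
    set W : Submodule ℂ (EuclideanSpace ℂ (Fin X.toList.length)) := LinearMap.range ψ
      with hWdef
    haveI : CompleteSpace W := FiniteDimensional.complete ℂ W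
    set u : EuclideanSpace ℂ (Fin X.toList.length) := Φ f with hu
    set p : EuclideanSpace ℂ (Fin X.toList.length) := W.starProjection u with hp
    have hpW : p ∈ W := W.starProjection_apply_mem u
    obtain ⟨hv, hψv⟩ := LinearMap.mem_range.mp hpW
    have horth : ∀ w ∈ W, inner (𝕜 := ℂ) (u - p) w = 0 :=
      W.starProjection_inner_eq_zero u
    have hpy : ∀ gv : V, ‖u - ψ gv‖ ^ 2 = ‖u - p‖ ^ 2 + ‖p - ψ gv‖ ^ 2 := by
      intro gv
      have hmem : p - ψ gv ∈ W := W.sub_mem hpW (LinearMap.mem_range_self ψ gv)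
      have h0 := horth _ hmem
      rw [show u - ψ gv = (u - p) + (p - ψ gv) by abel]
      have h := norm_add_sq_eq_norm_sq_add_norm_sq_of_inner_eq_zero _ _ h0
      simpa [pow_two] using h
    have hle : ∀ x y : EuclideanSpace ℂ (Fin X.toList.length),
        ‖x‖ ^ 2 ≤ ‖y‖ ^ 2 → ‖x‖ ≤ ‖y‖ := by
      intro x y hxy
      have h := Real.sqrt_le_sqrt hxy
      rwa [Real.sqrt_sq (norm_nonneg _), Real.sqrt_sq (norm_nonneg _)] at h
    refine ⟨↑hv, hv.2, ?_⟩
    intro g hg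
    set gv : V := ⟨g, hg⟩ with hgv
    have hΦhv : Φ (↑(↑hv : G)) = ψ hv := rfl
    have hΦg : Φ (↑g) = ψ gv := rfl
    constructor
    · rw [hrep, hrep, map_sub, map_sub, hΦhv, hΦg, hψv]
      apply hdivle
      apply hle
      rw [norm_sub_rev p u, norm_sub_rev (ψ gv) u]
      rw [hpy gv]
      nlinarith [sq_nonneg (‖p - ψ gv‖)]
    · rw [hrep, hrep, map_sub, map_sub, hΦhv, hΦg, hψv]
      apply hdivle
      apply hle
      rw [norm_sub_rev (ψ gv) u]
      rw [hpy gv]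
      rw [norm_sub_rev (ψ gv) p]
      nlinarith [sq_nonneg (‖u - p‖)]
  constructor
  · intro f
    obtain ⟨h, hhV, hmin⟩ := hex f
    exact ⟨h, ⟨hhV, fun g hg => (hmin g hg).1⟩,
      fun h' hh' => huniq f h' h hh'.1 hhV hh'.2 (fun g hg => (hmin g hg).1)⟩
  · intro f
    haveI : Nonempty V := ⟨0⟩
    obtain ⟨h, hhV, hmin⟩ := hex ↑f
    have hAf : A ↑f = h :=
      huniq ↑f (A ↑f) h (hA ↑f).1 hhV (hA ↑f).2 (fun g hg => (hmin g hg).1)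
    have hbound : ∀ gv : V, ν (f - A ↑f)
        ≤ (1 + C) * ‖(f : BoundedContinuousFunction D ℂ) - ((gv : G) : BoundedContinuousFunction D ℂ)‖ := by
      intro gv
      have hsplit : f - A ↑f = (f - ↑gv) + (↑gv - A ↑f) := by abel
      have t1 : ν (f - A ↑f) ≤ ν (f - ↑gv) + ν ((↑gv : G) - A ↑f) := by
        rw [hsplit]; exact map_add_le_add ν _ _
      have t2 : ν (f - ↑gv) ≤ ‖(f : BoundedContinuousFunction D ℂ) - ((gv : G) : BoundedContinuousFunction D ℂ)‖ := by
        have h := hν (f - ↑gv)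
        simpa using h
      have t3 : ν ((↑gv : G) - A ↑f) ≤ C * msNorm X (↑((↑gv : G) - A ↑f)) :=
        hdisc _ (V.sub_mem gv.2 (hA ↑f).1)
      have t4 : msNorm X ((↑((↑gv : G) - A ↑f)) : BoundedContinuousFunction D ℂ)
          ≤ msNorm X ((↑(↑gv : G) : BoundedContinuousFunction D ℂ) - ↑f) := by
        rw [hAf]
        push_cast
        exact (hmin ↑gv gv.2).2
      have t5 : msNorm X ((↑(↑gv : G) : BoundedContinuousFunction D ℂ) - ↑f)
          ≤ ‖(f : BoundedContinuousFunction D ℂ) - ((gv : G) : BoundedContinuousFunction D ℂ)‖ := by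
        calc msNorm X ((↑(↑gv : G) : BoundedContinuousFunction D ℂ) - ↑f)
            ≤ ‖(↑(↑gv : G) : BoundedContinuousFunction D ℂ) - ↑f‖ := msNorm_le_norm X _
          _ = _ := norm_sub_rev _ _
      have t6 := mul_le_mul_of_nonneg_left (t4.trans t5) hC.le
      nlinarith [t1, t2, t3, t6]
    have h1C : (0:ℝ) < 1 + C := by linarith
    have hlb : ν (f - A ↑f) / (1 + C)
        ≤ ⨅ g : V, ‖(f : BoundedContinuousFunction D ℂ) - ((g : G) : BoundedContinuousFunction D ℂ)‖ :=
      le_ciInf fun gv => (div_le_iff₀ h1C).mpr (by rw [mul_comm]; exact hbound gv)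
    calc ν (f - A ↑f) = (ν (f - A ↑f) / (1 + C)) * (1 + C) := by field_simp
      _ ≤ (⨅ g : V, ‖(f : BoundedContinuousFunction D ℂ) - ((g : G) : BoundedContinuousFunction D ℂ)‖) * (1 + C) :=
          mul_le_mul_of_nonneg_right hlb h1C.le
      _ = _ := mul_comm _ _
end
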